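/- arXiv:1112.4981 — 4 statements merged into one kernel-verified Lean document; each statement's English description precedes it below -/
import Mathlib

section
/- The formal power series G_n(x) = ∑_{ℓ∈ℕⁿ} (|ℓ|!/ℓ!)² x^ℓ satisfies the partial differential equation δ_{x_n}² G_n = x_n (𝒟 + 1)² G_n, where δ_{x_j} = x_j ∂/∂x_j and 𝒟 = δ_{x_1} + ... + δ_{x_n}. -/
/-- Coefficient function of the formal power series
`G_n(x) = ∑_{ℓ∈ℕⁿ} (|ℓ|!/ℓ!)² x^ℓ`: the coefficient of `x^ℓ` is `(|ℓ|!/ℓ!)²`. -/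
noncomputable def Gcoeff (n : ℕ) (ℓ : Fin n →₀ ℕ) : ℂ :=
  (((∑ j, ℓ j).factorial : ℂ) / ∏ j, ((ℓ j).factorial : ℂ)) ^ 2

/-- The Euler operator `δ_{x_j} = x_j ∂/∂x_j`, acting on formal power series
represented by their coefficient functions. -/
noncomputable def eulerOp {n : ℕ} (j : Fin n) (f : (Fin n →₀ ℕ) → ℂ) :
    (Fin n →₀ ℕ) → ℂ :=
  fun ℓ => (ℓ j : ℂ) * f ℓ

/-- `𝒟 = δ_{x_1} + ⋯ + δ_{x_n}`. -/
noncomputable def DOp {n : ℕ} (f : (Fin n →₀ ℕ) → ℂ) : (Fin n →₀ ℕ) → ℂ :=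
  fun ℓ => ∑ j, eulerOp j f ℓ

/-- The operator `𝒟 + m`. -/
noncomputable def shiftOp {n : ℕ} (m : ℕ) (f : (Fin n →₀ ℕ) → ℂ) :
    (Fin n →₀ ℕ) → ℂ :=
  fun ℓ => DOp f ℓ + (m : ℂ) * f ℓ

/-- Multiplication of a formal power series by the variable `x_j`. -/
noncomputable def mulX {n : ℕ} (j : Fin n) (f : (Fin n →₀ ℕ) → ℂ) :
    (Fin n →₀ ℕ) → ℂ :=
  fun ℓ => if ℓ j = 0 then 0 else f (ℓ - Finsupp.single j 1)

/-- The series `G_n` satisfies the PDE `δ_{x_n}² G_n = x_n (𝒟 + 1)² G_n`. -/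
theorem Gn_PDE (n : ℕ) :
    eulerOp (Fin.last n) (eulerOp (Fin.last n) (Gcoeff (n + 1))) =
      mulX (Fin.last n) (shiftOp 1 (shiftOp 1 (Gcoeff (n + 1)))) := by
  funext ℓ
  by_cases h : ℓ (Fin.last n) = 0
  · simp [eulerOp, mulX, h]
  · set ℓ' : Fin (n+1) →₀ ℕ := ℓ - Finsupp.single (Fin.last n) 1 with hℓ'def
    obtain ⟨k, hk⟩ := Nat.exists_eq_succ_of_ne_zero h
    have hother : ∀ i : Fin n, ℓ' i.castSucc = ℓ i.castSucc := by
      intro i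
      simp [hℓ'def, Finsupp.sub_apply, Finsupp.single_apply,
        (Fin.castSucc_lt_last i).ne, if_neg (Fin.castSucc_lt_last i).ne']
    have hlast : ℓ' (Fin.last n) = k := by
      simp [hℓ'def, Finsupp.sub_apply, hk]
    have hsum : ∑ j, ℓ j = (∑ j, ℓ' j) + 1 := by
      rw [Fin.sum_univ_castSucc, Fin.sum_univ_castSucc]
      simp [hother, hlast, hk]
      omega
    have hprod : ∏ j, ((ℓ j).factorial : ℂ)
        = (ℓ (Fin.last n) : ℂ) * ∏ j, ((ℓ' j).factorial : ℂ) := by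
      rw [Fin.prod_univ_castSucc, Fin.prod_univ_castSucc]
      simp only [hother, hlast, hk, Nat.factorial_succ]
      push_cast
      ring
    -- key coefficient identity
    have hP' : (∏ j, ((ℓ' j).factorial : ℂ)) ≠ 0 := by
      apply Finset.prod_ne_zero_iff.mpr
      intro j _
      exact_mod_cast (Nat.factorial_pos _).ne'
    have hmne : (ℓ (Fin.last n) : ℂ) ≠ 0 := by
      exact_mod_cast h
    have key : (ℓ (Fin.last n) : ℂ) * ((ℓ (Fin.last n) : ℂ) * Gcoeff (n+1) ℓ)
        = ((∑ j, ((ℓ' j : ℕ) : ℂ)) + 1) ^ 2 * Gcoeff (n+1) ℓ' := by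
      have hsC : ((∑ j, ℓ j : ℕ) : ℂ) = (∑ j, ((ℓ' j : ℕ) : ℂ)) + 1 := by
        rw [hsum]; push_cast; ring
      unfold Gcoeff
      rw [hsum, Nat.factorial_succ, hprod]
      push_cast
      field_simp
    -- now compute both sides
    simp only [eulerOp, mulX, if_neg h, shiftOp, DOp, eulerOp, ← hℓ'def]
    simp only [← Finset.sum_mul]
    linear_combination key
end

section
/- For every positive integer k and every j ∈ {1,...,n}, the series G_n satisfies ((1/x_j) δ_{x_j}²)^k G_n(x) = ∑_{ℓ∈ℕⁿ} ((|ℓ|+k)!/ℓ!)² x^ℓ, as an identity of formal power series (after noting that δ_{x_j}² applied to G_n is divisible by x_j). -/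
/-- The operator `(1/x_j) δ_{x_j}²`, on coefficient functions: the coefficient at `ℓ` of
`(1/x_j) δ_{x_j}² f` is `(ℓ_j + 1)²` times the coefficient of `f` at `ℓ + e_j`
(this uses that `δ_{x_j}² f` is divisible by `x_j`). -/
noncomputable def invXDelSq {n : ℕ} (j : Fin n) (f : (Fin n →₀ ℕ) → ℂ) :
    (Fin n →₀ ℕ) → ℂ :=
  fun ℓ => ((ℓ j : ℂ) + 1) ^ 2 * f (ℓ + Finsupp.single j 1)

lemma invXDelSq_iterate_Gn_aux (n k : ℕ) (j : Fin n) :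
    (invXDelSq j)^[k] (Gcoeff n) =
      fun ℓ : Fin n →₀ ℕ =>
        ((((∑ i, ℓ i) + k).factorial : ℂ) / ∏ i, ((ℓ i).factorial : ℂ)) ^ 2 := by
  induction k with
  | zero => funext ℓ; simp [Gcoeff]
  | succ k ih =>
    rw [Function.iterate_succ_apply', ih]
    funext ℓ
    have hsum : (∑ i, ((ℓ + Finsupp.single j 1 : Fin n →₀ ℕ)) i) = (∑ i, ℓ i) + 1 := by
      simp [Finsupp.add_apply, Finset.sum_add_distrib, Finsupp.single_apply]
    have hprod : (∏ i, ((((ℓ + Finsupp.single j 1 : Fin n →₀ ℕ)) i).factorial : ℂ)) =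
        ((ℓ j : ℂ) + 1) * ∏ i, ((ℓ i).factorial : ℂ) := by
      rw [← Finset.mul_prod_erase _ _ (Finset.mem_univ j),
          ← Finset.mul_prod_erase _ (fun i => ((ℓ i).factorial : ℂ)) (Finset.mem_univ j)]
      have h1 : ((ℓ + Finsupp.single j 1 : Fin n →₀ ℕ) j) = ℓ j + 1 := by
        simp [Finsupp.add_apply]
      rw [h1, Nat.factorial_succ]
      push_cast
      rw [Finset.prod_congr rfl (fun i hi => ?_)]
      · ring
      · have : i ≠ j := Finset.ne_of_mem_erase hi
        simp [Finsupp.add_apply, Finsupp.single_apply, this.symm]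
    simp only [invXDelSq, hsum, hprod]
    have hne : ((ℓ j : ℂ) + 1) ≠ 0 := by
      have := (ℓ j).cast_add_one_ne_zero (R := ℂ)
      exact_mod_cast this
    have : (∑ i, ℓ i) + 1 + k = (∑ i, ℓ i) + (k + 1) := by ring
    rw [this, div_mul_eq_div_div_swap, div_pow, mul_comm,
        div_mul_cancel₀ _ (pow_ne_zero 2 hne)]

/-- For every `k ≥ 1` and every `j`,
`((1/x_j) δ_{x_j}²)^k G_n = ∑_{ℓ∈ℕⁿ} ((|ℓ|+k)!/ℓ!)² x^ℓ`. -/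
theorem invXDelSq_iterate_Gn (n k : ℕ) (hk : 1 ≤ k) (j : Fin n) :
    (invXDelSq j)^[k] (Gcoeff n) =
      fun ℓ : Fin n →₀ ℕ =>
        ((((∑ i, ℓ i) + k).factorial : ℂ) / ∏ i, ((ℓ i).factorial : ℂ)) ^ 2 := by
  exact invXDelSq_iterate_Gn_aux n k j
end

section
/- For every positive integer k, ((1/x_n) δ_{x_n}²)^k G_n(x) = ∏_{m=1}^k (𝒟 + m)² G_n(x), where 𝒟 = δ_{x_1} + ... + δ_{x_n}. -/
/-- The operator `∏_{m=1}^k (𝒟 + m)²`. -/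
noncomputable def prodShiftOp {n : ℕ} : ℕ → ((Fin n →₀ ℕ) → ℂ) → ((Fin n →₀ ℕ) → ℂ)
  | 0, f => f
  | k + 1, f => shiftOp (k + 1) (shiftOp (k + 1) (prodShiftOp k f))

lemma sum_add_single {n : ℕ} (ℓ : Fin n →₀ ℕ) (j : Fin n) :
    ∑ i, ((ℓ + Finsupp.single j 1 : Fin n →₀ ℕ)) i = (∑ i, ℓ i) + 1 := by
  simp [Finsupp.add_apply, Finset.sum_add_distrib, Finsupp.single_apply]

lemma Gcoeff_shift {n : ℕ} (ℓ : Fin n →₀ ℕ) (j : Fin n) :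
    ((ℓ j : ℂ) + 1) ^ 2 * Gcoeff n (ℓ + Finsupp.single j 1) =
      ((∑ i, ℓ i : ℕ) + 1 : ℂ) ^ 2 * Gcoeff n ℓ := by
  have hsum := sum_add_single ℓ j
  have hprod : ∏ i, ((((ℓ + Finsupp.single j 1 : Fin n →₀ ℕ)) i).factorial : ℂ) =
      ((ℓ j : ℂ) + 1) * ∏ i, ((ℓ i).factorial : ℂ) := by
    have h1 : ∀ i ∈ Finset.univ.erase j,
        ((((ℓ + Finsupp.single j 1 : Fin n →₀ ℕ)) i).factorial : ℂ) = ((ℓ i).factorial : ℂ) := by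
      intro i hi
      simp [Finsupp.add_apply, Finsupp.single_apply, (Finset.ne_of_mem_erase hi).symm]
    calc ∏ i, ((((ℓ + Finsupp.single j 1 : Fin n →₀ ℕ)) i).factorial : ℂ)
        = ((((ℓ + Finsupp.single j 1 : Fin n →₀ ℕ)) j).factorial : ℂ) *
          ∏ i ∈ Finset.univ.erase j, ((((ℓ + Finsupp.single j 1 : Fin n →₀ ℕ)) i).factorial : ℂ) :=
          (Finset.mul_prod_erase Finset.univ _ (Finset.mem_univ j)).symm
      _ = (((ℓ j : ℂ) + 1) * ((ℓ j).factorial : ℂ)) *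
          ∏ i ∈ Finset.univ.erase j, ((ℓ i).factorial : ℂ) := by
          rw [Finset.prod_congr rfl h1]
          congr 1
          simp [Finsupp.add_apply, Nat.factorial_succ]
      _ = ((ℓ j : ℂ) + 1) * ∏ i, ((ℓ i).factorial : ℂ) := by
          rw [← Finset.mul_prod_erase Finset.univ (fun i => ((ℓ i).factorial : ℂ))
            (Finset.mem_univ j)]
          ring
  have hP : (∏ i, ((ℓ i).factorial : ℂ)) ≠ 0 :=
    Finset.prod_ne_zero_iff.mpr (fun i _ => Nat.cast_ne_zero.mpr (Nat.factorial_ne_zero _))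
  have hj : ((ℓ j : ℂ) + 1) ≠ 0 := Nat.cast_add_one_ne_zero _
  unfold Gcoeff
  rw [hsum, hprod, Nat.factorial_succ]
  push_cast
  field_simp

lemma invXDelSq_iterate_eval {n : ℕ} (j : Fin n) (k : ℕ) (ℓ : Fin n →₀ ℕ) :
    (invXDelSq j)^[k] (Gcoeff n) ℓ =
      (∏ m ∈ Finset.range k, (((∑ i, ℓ i : ℕ) : ℂ) + m + 1)) ^ 2 * Gcoeff n ℓ := by
  induction k generalizing ℓ with
  | zero => simp
  | succ k ih =>
    rw [Function.iterate_succ_apply', invXDelSq]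
    rw [ih (ℓ + Finsupp.single j 1), sum_add_single ℓ j]
    have h2 : ((ℓ j : ℂ) + 1) ^ 2 *
        ((∏ m ∈ Finset.range k, (((∑ i, ℓ i + 1 : ℕ) : ℂ) + m + 1)) ^ 2 *
          Gcoeff n (ℓ + Finsupp.single j 1)) =
        (∏ m ∈ Finset.range k, (((∑ i, ℓ i + 1 : ℕ) : ℂ) + m + 1)) ^ 2 *
          (((ℓ j : ℂ) + 1) ^ 2 * Gcoeff n (ℓ + Finsupp.single j 1)) := by ring
    have hpr : (∏ m ∈ Finset.range k, (((∑ i, ℓ i + 1 : ℕ) : ℂ) + m + 1)) =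
        ∏ m ∈ Finset.range k, (((∑ i, ℓ i : ℕ) : ℂ) + ((m + 1 : ℕ) : ℂ) + 1) :=
      Finset.prod_congr rfl (fun m _ => by push_cast; ring)
    rw [h2, Gcoeff_shift, hpr,
      Finset.prod_range_succ' (fun m => (((∑ i, ℓ i : ℕ) : ℂ) + (m : ℂ) + 1))]
    push_cast
    ring

lemma prodShiftOp_eval {n : ℕ} (k : ℕ) (f : (Fin n →₀ ℕ) → ℂ) (ℓ : Fin n →₀ ℕ) :
    prodShiftOp k f ℓ =
      (∏ m ∈ Finset.range k, (((∑ i, ℓ i : ℕ) : ℂ) + m + 1)) ^ 2 * f ℓ := by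
  have hshift : ∀ (m : ℕ) (g : (Fin n →₀ ℕ) → ℂ),
      shiftOp m g ℓ = (((∑ i, ℓ i : ℕ) : ℂ) + m) * g ℓ := by
    intro m g
    simp only [shiftOp, DOp, eulerOp, ← Finset.sum_mul]
    push_cast
    ring
  induction k with
  | zero => simp [prodShiftOp]
  | succ k ih =>
    simp only [prodShiftOp, hshift, ih, Finset.prod_range_succ]
    push_cast
    ring

/-- For every `k ≥ 1`, `((1/x_n) δ_{x_n}²)^k G_n = ∏_{m=1}^k (𝒟 + m)² G_n`. -/
theorem invXDelSq_iterate_eq_prodShiftOp (n k : ℕ) (hk : 1 ≤ k) :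
    (invXDelSq (Fin.last n))^[k] (Gcoeff (n + 1)) =
      prodShiftOp k (Gcoeff (n + 1)) := by
  funext ℓ
  rw [invXDelSq_iterate_eval, prodShiftOp_eval]
end

section
/- Let Q_n(x) = (1 - ∑_{j=1}^n x_j)² - 2∑_{i≠j} x_i x_j and let T_{n,j} be the involution of (ℂ*)ⁿ given by T_{n,j}(x) = (x₁/x_j, ..., x_{j-1}/x_j, 1/x_j, x_{j+1}/x_j, ..., x_n/x_j). Then Q_n(T_{n,j}(x)) = Q_n(x)/x_j² for all x ∈ (ℂ*)ⁿ. -/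
/-- `Q_n(x) = (1 - ∑_j x_j)² - 2 ∑_{i≠j} x_i x_j` (sum over ordered pairs `i ≠ j`). -/
noncomputable def Qn {n : ℕ} (x : Fin n → ℂ) : ℂ :=
  (1 - ∑ j, x j) ^ 2 - 2 * ∑ p ∈ Finset.univ.offDiag, x p.1 * x p.2

/-- The involution `T_{n,j}` of `(ℂ*)ⁿ`: divide every coordinate by `x_j`
and invert the `j`-th one. -/
noncomputable def Tnj {n : ℕ} (j : Fin n) (x : Fin n → ℂ) : Fin n → ℂ :=
  fun i => if i = j then 1 / x j else x i / x j

lemma sum_offDiag_mul {n : ℕ} (f : Fin n → ℂ) :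
    ∑ p ∈ Finset.univ.offDiag, f p.1 * f p.2 = (∑ i, f i) ^ 2 - ∑ i, (f i) ^ 2 := by
  have h : (Finset.univ : Finset (Fin n)).offDiag =
      (Finset.univ ×ˢ Finset.univ) \ Finset.univ.diag := by
    ext p; simp [Finset.mem_offDiag, Finset.mem_diag]
  rw [h, Finset.sum_sdiff_eq_sub (by intro p hp; simp [Finset.mem_diag] at hp; simp [hp])]
  rw [Finset.sum_product, sq, Finset.sum_mul_sum, Finset.sum_diag]
  congr 1
  exact Finset.sum_congr rfl fun i _ => (sq (f i)).symm

/-- `Q_n(T_{n,j} x) = Q_n(x)/x_j²` for all `x ∈ (ℂ*)ⁿ`. -/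
theorem Qn_Tnj {n : ℕ} (j : Fin n) (x : Fin n → ℂ) (hx : ∀ i, x i ≠ 0) :
    Qn (Tnj j x) = Qn x / (x j) ^ 2 := by
  have hj := hx j
  have hA : ∑ i, Tnj j x i = (1 + (∑ i, x i) - x j) / x j := by
    rw [← Finset.add_sum_erase _ _ (Finset.mem_univ j)]
    simp only [Tnj, eq_self_iff_true, if_true]
    rw [Finset.sum_congr rfl (fun i hi => if_neg (Finset.ne_of_mem_erase hi)),
      ← Finset.sum_div, Finset.sum_erase_eq_sub (Finset.mem_univ j)]
    field_simp
    ring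
  have hB : ∑ i, (Tnj j x i) ^ 2 = (1 + (∑ i, (x i) ^ 2) - (x j) ^ 2) / (x j) ^ 2 := by
    rw [← Finset.add_sum_erase _ _ (Finset.mem_univ j)]
    simp only [Tnj, eq_self_iff_true, if_true]
    rw [Finset.sum_congr rfl (fun i hi => by rw [if_neg (Finset.ne_of_mem_erase hi), div_pow]),
      ← Finset.sum_div, Finset.sum_erase_eq_sub (Finset.mem_univ j), div_pow]
    field_simp
    ring
  rw [Qn, Qn, sum_offDiag_mul, sum_offDiag_mul, hA, hB]
  field_simp
  ring
end
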